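/- Positive definiteness of the Lyapunov matrix P. Let S ∈ ℝ^{m×m} be symmetric with all eigenvalues in the open interval (−1,1). Then the block matrix P = [[2I, (I−S)^{−1} − 2I], [(I−S)^{−1} − 2I, (I−S)^{−2} − 2(I−S)^{−1} + 2I]] ∈ ℝ^{2m×2m} is positive definite. -/

import Mathlib

open Finset Matrix

lemma aux_posDef_ctm {n : Type*} [Fintype n] [DecidableEq n]
    (A : Matrix n n ℝ) (h : Function.Injective A.mulVec) : (Aᴴ * A).PosDef := by
  refine Matrix.PosDef.of_dotProduct_mulVec_pos (Matrix.posSemidef_conjTranspose_mul_self A).1 fun x hx => ?_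
  have hAx : A *ᵥ x ≠ 0 := fun hz => hx (h (by simpa using hz))
  have : star x ⬝ᵥ (Aᴴ * A) *ᵥ x = (A *ᵥ x) ⬝ᵥ (A *ᵥ x) := by
    rw [star_trivial, ← Matrix.mulVec_mulVec, Matrix.dotProduct_mulVec,
      Matrix.conjTranspose_eq_transpose_of_trivial, Matrix.vecMul_transpose]
  rw [this]
  have := Matrix.dotProduct_star_self_pos_iff (v := A *ᵥ x) |>.mpr hAx
  simpa using this

/-- **Positive definiteness of the Lyapunov matrix `P`.**
Let `S ∈ ℝ^{m×m}` be symmetric with all eigenvalues in `(−1,1)`. Then the block matrix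
`P = [[2I, (I−S)⁻¹ − 2I], [(I−S)⁻¹ − 2I, (I−S)⁻² − 2(I−S)⁻¹ + 2I]]` is positive definite. -/
theorem lyapunov_matrix_posdef
    (m : ℕ) (S : Matrix (Fin m) (Fin m) ℝ)
    (hS : S.IsHermitian)
    (hspec : ∀ μ ∈ spectrum ℝ S, μ ∈ Set.Ioo (-1 : ℝ) 1) :
    (Matrix.fromBlocks (2 : Matrix (Fin m) (Fin m) ℝ)
      ((1 - S)⁻¹ - 2) ((1 - S)⁻¹ - 2)
      ((1 - S)⁻¹ ^ 2 - 2 * (1 - S)⁻¹ + 2)).PosDef := by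
  have h1 : IsUnit ((1 : Matrix (Fin m) (Fin m) ℝ) - S) := by
    have : (1 : ℝ) ∉ spectrum ℝ S := fun h => absurd (hspec 1 h).2 (lt_irrefl 1)
    simpa using spectrum.notMem_iff.mp this
  set A : Matrix (Fin m) (Fin m) ℝ := (1 - S)⁻¹ with hAdef
  have hAunit : IsUnit A := (Matrix.isUnit_nonsing_inv_iff).mpr h1
  have hAherm : A.IsHermitian := ((Matrix.isHermitian_one.sub hS)).inv
  set c : ℝ := Real.sqrt 2 with hc
  have hc2 : c * c = 2 := Real.mul_self_sqrt (by norm_num)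
  have hcpos : (0:ℝ) < c := Real.sqrt_pos.mpr (by norm_num)
  set M : Matrix (Fin m ⊕ Fin m) (Fin m ⊕ Fin m) ℝ :=
    Matrix.fromBlocks (c • 1) ((c/2) • (A - 2)) 0 ((c/2) • A) with hM
  have h2eq : (2 : Matrix (Fin m) (Fin m) ℝ) = (2:ℝ) • 1 := by
    rw [two_smul, one_add_one_eq_two]
  have h2herm : (2 : Matrix (Fin m) (Fin m) ℝ).IsHermitian := by
    show _ᴴ = _
    rw [h2eq]; simp
  have hA2herm : (A - 2).IsHermitian := hAherm.sub h2herm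
  have hkey : Mᴴ * M = Matrix.fromBlocks (2 : Matrix (Fin m) (Fin m) ℝ)
      (A - 2) (A - 2) (A ^ 2 - 2 * A + 2) := by
    rw [hM, Matrix.fromBlocks_conjTranspose, Matrix.fromBlocks_multiply,
      Matrix.fromBlocks_inj]
    refine ⟨?_, ?_, ?_, ?_⟩
    · simp only [Matrix.conjTranspose_smul, Matrix.conjTranspose_one, star_trivial,
        Matrix.smul_mul, Matrix.mul_smul, smul_smul, mul_one, Matrix.one_mul,
        Matrix.conjTranspose_zero, Matrix.zero_mul, add_zero, hc2, ← h2eq]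
    · simp only [Matrix.conjTranspose_smul, Matrix.conjTranspose_one, star_trivial,
        Matrix.smul_mul, Matrix.mul_smul, smul_smul, Matrix.one_mul,
        Matrix.conjTranspose_zero, Matrix.zero_mul, add_zero]
      rw [show c/2 * c = 1 by field_simp; linarith [hc2]]
      simp
    · simp only [Matrix.conjTranspose_smul, star_trivial, hA2herm.eq,
        Matrix.smul_mul, Matrix.mul_smul, smul_smul, Matrix.mul_one,
        Matrix.conjTranspose_zero, Matrix.mul_zero, add_zero]
      rw [show c * (c/2) = 1 by field_simp; linarith [hc2]]
      simp
    · simp only [Matrix.conjTranspose_smul, star_trivial, hA2herm.eq, hAherm.eq,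
        Matrix.smul_mul, Matrix.mul_smul, smul_smul]
      rw [show c/2 * (c/2) = 1/2 by field_simp; linarith [hc2], ← smul_add]
      have expand : (A - 2) * (A - 2) + A * A = (2:ℝ) • (A ^ 2 - 2 * A + 2) := by
        rw [two_smul]; noncomm_ring
      rw [expand, smul_smul]; norm_num
  have hMunit : IsUnit M := by
    rw [Matrix.isUnit_iff_isUnit_det, hM, Matrix.det_fromBlocks_zero₂₁]
    apply IsUnit.mul
    · simp only [Matrix.det_smul, Matrix.det_one, mul_one]
      exact isUnit_iff_ne_zero.mpr (pow_ne_zero _ hcpos.ne')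
    · rw [Matrix.det_smul]
      exact (isUnit_iff_ne_zero.mpr (pow_ne_zero _ (by positivity))).mul
        ((Matrix.isUnit_iff_isUnit_det A).mp hAunit)
  have := aux_posDef_ctm M (Matrix.mulVec_injective_iff_isUnit.mpr hMunit)
  rwa [hkey] at this
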